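/- Let K be a field of characteristic 2. Every left-normed monomial M = ⁅x_{i_1}^{a_1}, x_{i_2}^{a_2}, …, x_{i_n}^{a_n}⁆ (n ≥ 1) that is a ℤ-graded identity of U_1 belongs to ⟨S⟩_{T_ℤ}, where S = {⁅x_1^a, x_2^b⁆ : a, b ∈ ℤ, a ≡ b (mod 2)}. (Every graded monomial identity of U_1 is a consequence of the identities ⁅x_1^a, x_2^b⁆ with a ≡ b (mod 2).) -/

import Mathlib

open FreeLieAlgebra LaurentPolynomial

/-- The free Lie algebra `L` over `K` on the generators `x_i^a`, `(a, i) : ℤ × ℕ`;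
the generator `x_i^a := FreeLieAlgebra.of K (a, i)` has ℤ-degree `a`. -/
abbrev FL (K : Type*) [Field K] := FreeLieAlgebra K (ℤ × ℕ)

variable (K : Type*) [Field K]

/-- Iterated Lie brackets of generators whose ℤ-degrees sum to `a`. -/
inductive IsHomBracket : FL K → ℤ → Prop
  | gen (a : ℤ) (i : ℕ) : IsHomBracket (FreeLieAlgebra.of K (a, i)) a
  | bracket {u v : FL K} {a b : ℤ} :
      IsHomBracket u a → IsHomBracket v b → IsHomBracket ⁅u, v⁆ (a + b)

/-- The homogeneous component `L_a` of the free Lie algebra. -/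
noncomputable def homComp (a : ℤ) : Submodule K (FL K) :=
  Submodule.span K {w : FL K | IsHomBracket K w a}

/-- A graded endomorphism of the free Lie algebra. -/
def IsGradedEndo (φ : FL K →ₗ⁅K⁆ FL K) : Prop :=
  ∀ (a : ℤ) (i : ℕ), φ (FreeLieAlgebra.of K (a, i)) ∈ homComp K a

/-- A `T_ℤ`-ideal: a Lie ideal stable under all graded endomorphisms. -/
def IsTIdeal (I : LieIdeal K (FL K)) : Prop :=
  ∀ φ : FL K →ₗ⁅K⁆ FL K, IsGradedEndo K φ → ∀ x ∈ I, φ x ∈ I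

/-- `⟨S⟩_{T_ℤ}`, the smallest `T_ℤ`-ideal containing `S` (as a set of elements). -/
def TSpan (S : Set (FL K)) : Set (FL K) :=
  {x : FL K | ∀ I : LieIdeal K (FL K), IsTIdeal K I → S ⊆ (I : Set (FL K)) → x ∈ I}

/-- `U_1`, the Lie algebra of `K`-linear derivations of `K[t, t⁻¹]`. -/
abbrev U1 (K : Type*) [Field K] := Derivation K (LaurentPolynomial K) (LaurentPolynomial K)

/-- Evaluation of a derivation of `K[t,t⁻¹]` at `t`, as a linear map. -/
noncomputable def evalT : U1 K →ₗ[K] LaurentPolynomial K where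
  toFun D := D (T 1)
  map_add' D E := by simp
  map_smul' c D := by simp

/-- The homogeneous component `(U_1)_a = {D | D t ∈ K • t^{a+1}}` of the canonical
ℤ-grading of `U_1`. -/
noncomputable def U1comp (a : ℤ) : Submodule K (U1 K) :=
  (Submodule.span K ({T (a + 1)} : Set (LaurentPolynomial K))).comap (evalT K)

/-- `T_ℤ(U_1)`, the set of ℤ-graded identities of `U_1`. -/
def TU1 : Set (FL K) :=
  {f : FL K | ∀ v : ℤ × ℕ → U1 K, (∀ (a : ℤ) (i : ℕ), v (a, i) ∈ U1comp K a) →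
    FreeLieAlgebra.lift K v f = 0}

/-- The left-normed monomial `⁅x_{idx 0}^{a 0}, x_{idx 1}^{a 1}, …, x_{idx n}^{a n}⁆`
in the free Lie algebra, on `n + 1` generators. -/
noncomputable def lnMonFin : ∀ n : ℕ, (Fin (n + 1) → ℤ) → (Fin (n + 1) → ℕ) → FL K
  | 0, a, idx => FreeLieAlgebra.of K (a 0, idx 0)
  | n + 1, a, idx =>
      ⁅lnMonFin n (fun k => a k.castSucc) (fun k => idx k.castSucc),
        FreeLieAlgebra.of K (a (Fin.last (n + 1)), idx (Fin.last (n + 1)))⁆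

/-- Iterated Lie brackets of generators in which each generator `x_i^a` occurs
exactly `d (a, i)` times. -/
inductive IsMonOfMultiDeg : FL K → ((ℤ × ℕ) →₀ ℕ) → Prop
  | gen (p : ℤ × ℕ) : IsMonOfMultiDeg (FreeLieAlgebra.of K p) (Finsupp.single p 1)
  | bracket {u v : FL K} {d e : (ℤ × ℕ) →₀ ℕ} :
      IsMonOfMultiDeg u d → IsMonOfMultiDeg v e → IsMonOfMultiDeg ⁅u, v⁆ (d + e)

/-- `f` is multihomogeneous of multidegree `d`. -/
def IsMultiHom (f : FL K) (d : (ℤ × ℕ) →₀ ℕ) : Prop :=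
  f ∈ Submodule.span K {w : FL K | IsMonOfMultiDeg K w d}

section Aux

variable (K : Type*) [Field K]

open LaurentPolynomial FreeLieAlgebra

lemma smul_T' (c : K) (m : ℤ) : c • (T m : LaurentPolynomial K) = C c * T m := by
  rw [← single_eq_C_mul_T, T]
  rw [AddMonoidAlgebra.smul_single]
  simp

/-- The underlying linear map of the derivation `t^{a+1} d/dt`. -/
noncomputable def ellMap (a : ℤ) : LaurentPolynomial K →ₗ[K] LaurentPolynomial K :=
  Finsupp.lsum K (fun (n : ℤ) => (n : K) • LinearMap.toSpanSingleton K (LaurentPolynomial K) (T (n + a)))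
    ∘ₗ (AddMonoidAlgebra.coeffLinearEquiv K).toLinearMap

lemma ellMap_single (a n : ℤ) (c : K) :
    ellMap K a (AddMonoidAlgebra.single n c) = (n : K) • (c • T (n + a)) := by
  rw [ellMap, LinearMap.comp_apply]
  erw [show (AddMonoidAlgebra.coeffLinearEquiv K) (AddMonoidAlgebra.single n c) =
    Finsupp.single n c from rfl, Finsupp.lsum_single]
  rfl

lemma ellMap_CT (a n : ℤ) (c : K) :
    ellMap K a (C c * T n) = (n : K) • (C c * T (n + a)) := by
  rw [← single_eq_C_mul_T, ellMap_single, smul_T']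

lemma CT_mul_CT (n m : ℤ) (c d : K) :
    (C c * T n) * (C d * T m) = C (c * d) * T (n + m) := by
  rw [T_add, map_mul]
  ring_nf

lemma ellMap_mul_CT (a n m : ℤ) (c d : K) :
    ellMap K a ((C c * T n) * (C d * T m)) =
      (C c * T n) * ellMap K a (C d * T m) + (C d * T m) * ellMap K a (C c * T n) := by
  rw [CT_mul_CT, ellMap_CT, ellMap_CT, ellMap_CT, mul_smul_comm, mul_smul_comm,
    CT_mul_CT, CT_mul_CT, show m + (n + a) = n + m + a by ring,
    show n + (m + a) = n + m + a by ring, show d * c = c * d by ring, ← add_smul]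
  rw [add_comm (m : K) (n : K), ← Int.cast_add]

lemma ellMap_mul (a : ℤ) (f g : LaurentPolynomial K) :
    ellMap K a (f * g) = f * ellMap K a g + g * ellMap K a f := by
  induction f using LaurentPolynomial.induction_on' with
  | add p q hp hq =>
    rw [add_mul, map_add, hp, hq, map_add]
    ring
  | C_mul_T n c =>
    induction g using LaurentPolynomial.induction_on' with
    | add p q hp hq =>
      rw [mul_add, map_add, hp, hq, map_add]
      ring
    | C_mul_T m d => exact ellMap_mul_CT K a n m c d

/-- The derivation `e_a = t^{a+1} d/dt` of `K[t,t⁻¹]`. -/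
noncomputable def eDer (a : ℤ) : U1 K where
  toLinearMap := ellMap K a
  map_one_eq_zero' := by
    have h1 : (1 : LaurentPolynomial K) = C 1 * T 0 := by simp
    show ellMap K a 1 = 0
    rw [h1, ellMap_CT]
    simp
  leibniz' f g := by
    show ellMap K a (f * g) = _
    rw [ellMap_mul]
    simp only [smul_eq_mul]

@[simp] lemma eDer_apply (a : ℤ) (f : LaurentPolynomial K) : eDer K a f = ellMap K a f := rfl

lemma eDer_CT (a n : ℤ) (c : K) :
    eDer K a (C c * T n) = (n : K) • (C c * T (n + a)) := ellMap_CT K a n c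

lemma eDer_T (a n : ℤ) : eDer K a (T n) = (n : K) • T (n + a) := by
  have := eDer_CT K a n (1 : K)
  simpa using this

lemma T_ne_zero' (n : ℤ) : (T n : LaurentPolynomial K) ≠ 0 :=
  (isUnit_T n).ne_zero

lemma eDer_ne_zero (a : ℤ) : eDer K a ≠ 0 := by
  intro h
  have h1 : eDer K a (T 1) = 0 := by rw [h]; rfl
  rw [eDer_T] at h1
  simp only [Int.cast_one, one_smul] at h1
  exact T_ne_zero' K _ h1

lemma eDer_mem (a : ℤ) : eDer K a ∈ U1comp K a := by
  rw [U1comp, Submodule.mem_comap]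
  have h1 : evalT K (eDer K a) = T (a + 1) := by
    show eDer K a (T 1) = T (a + 1)
    rw [eDer_T, show (1 : ℤ) + a = a + 1 by ring]
    simp
  rw [h1]
  exact Submodule.mem_span_singleton_self _

lemma smul_bracket (c : K) (D E : U1 K) : ⁅c • D, E⁆ = c • ⁅D, E⁆ := by
  apply Derivation.ext
  intro f
  simp only [Derivation.commutator_apply, Derivation.smul_apply, Derivation.map_smul, smul_sub]

lemma eDer_bracket (a b : ℤ) :
    ⁅eDer K a, eDer K b⁆ = ((b : K) - (a : K)) • eDer K (a + b) := by
  apply Derivation.ext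
  intro f
  rw [Derivation.smul_apply]
  induction f using LaurentPolynomial.induction_on' with
  | add p q hp hq =>
    rw [map_add, map_add, hp, hq, smul_add]
  | C_mul_T n c =>
    rw [Derivation.commutator_apply, eDer_CT, eDer_CT, Derivation.map_smul,
      Derivation.map_smul, eDer_CT, eDer_CT, eDer_CT]
    rw [show n + b + a = n + (a + b) by ring, show n + a + b = n + (a + b) by ring]
    rw [smul_smul, smul_smul, smul_smul, ← sub_smul]
    congr 1
    push_cast
    ring

/-- The scalar by which evaluating the left-normed monomial at `e_{a k}` differs from
`e_{∑ a k}`. -/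
noncomputable def evalCoeff : ∀ n : ℕ, (Fin (n + 1) → ℤ) → K
  | 0, _ => 1
  | n + 1, a => evalCoeff n (fun k => a k.castSucc) *
      ((a (Fin.last (n + 1)) : K) - ((∑ k : Fin (n + 1), a k.castSucc : ℤ) : K))

lemma lift_lnMonFin (n : ℕ) (a : Fin (n + 1) → ℤ) (idx : Fin (n + 1) → ℕ) :
    FreeLieAlgebra.lift K (fun p : ℤ × ℕ => eDer K p.1) (lnMonFin K n a idx) =
      evalCoeff K n a • eDer K (∑ k, a k) := by
  induction n with
  | zero =>
    show FreeLieAlgebra.lift K _ (FreeLieAlgebra.of K (a 0, idx 0)) = _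
    rw [lift_of_apply]
    rw [show (∑ k, a k) = a 0 from Fin.sum_univ_one a]
    rw [show evalCoeff K 0 a = 1 from rfl, one_smul]
  | succ n ih =>
    show FreeLieAlgebra.lift K _
        ⁅lnMonFin K n (fun k => a k.castSucc) (fun k => idx k.castSucc),
          FreeLieAlgebra.of K (a (Fin.last (n + 1)), idx (Fin.last (n + 1)))⁆ = _
    rw [LieHom.map_lie, ih, lift_of_apply, smul_bracket, eDer_bracket, smul_smul]
    rw [show evalCoeff K (n + 1) a = evalCoeff K n (fun k => a k.castSucc) *
      ((a (Fin.last (n + 1)) : K) - ((∑ k : Fin (n + 1), a k.castSucc : ℤ) : K)) from rfl]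
    rw [Fin.sum_univ_castSucc a]

lemma evalCoeff_eq_zero (n : ℕ) (a : Fin (n + 1) → ℤ) (idx : Fin (n + 1) → ℕ)
    (hM : lnMonFin K n a idx ∈ TU1 K) : evalCoeff K n a = 0 := by
  have h := hM (fun p => eDer K p.1) (fun c _ => eDer_mem K c)
  rw [lift_lnMonFin] at h
  by_contra hC
  have h2 : eDer K (∑ k, a k) = 0 := by
    have h3 := congrArg (fun D => (evalCoeff K n a)⁻¹ • D) h
    simpa [smul_smul, inv_mul_cancel₀ hC] using h3
  exact eDer_ne_zero K _ h2

lemma isHomBracket_lnMonFin (n : ℕ) (a : Fin (n + 1) → ℤ) (idx : Fin (n + 1) → ℕ) :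
    IsHomBracket K (lnMonFin K n a idx) (∑ k, a k) := by
  induction n with
  | zero =>
    rw [show (∑ k, a k) = a 0 from Fin.sum_univ_one a]
    exact IsHomBracket.gen (a 0) (idx 0)
  | succ n ih =>
    rw [Fin.sum_univ_castSucc a]
    exact IsHomBracket.bracket (ih _ _) (IsHomBracket.gen _ _)

open Classical in
lemma key_lemma [CharP K 2] (I : LieIdeal K (FL K)) (hTI : IsTIdeal K I)
    (hS : {f : FL K | ∃ a b : ℤ, a ≡ b [ZMOD 2] ∧
      f = ⁅FreeLieAlgebra.of K (a, 1), FreeLieAlgebra.of K (b, 2)⁆} ⊆ (I : Set (FL K))) :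
    ∀ n (a : Fin (n + 1) → ℤ) (idx : Fin (n + 1) → ℕ),
      evalCoeff K n a = 0 → lnMonFin K n a idx ∈ I := by
  intro n
  induction n with
  | zero =>
    intro a idx h
    exact absurd h one_ne_zero
  | succ n ih =>
    intro a idx h
    have hdef : lnMonFin K (n + 1) a idx =
        ⁅lnMonFin K n (fun k => a k.castSucc) (fun k => idx k.castSucc),
          FreeLieAlgebra.of K (a (Fin.last (n + 1)), idx (Fin.last (n + 1)))⁆ := rfl
    rcases mul_eq_zero.mp h with h1 | h2
    · have hu := ih (fun k => a k.castSucc) (fun k => idx k.castSucc) h1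
      have h3 : ⁅FreeLieAlgebra.of K (a (Fin.last (n + 1)), idx (Fin.last (n + 1))),
          lnMonFin K n (fun k => a k.castSucc) (fun k => idx k.castSucc)⁆ ∈ I :=
        I.lie_mem hu
      rw [hdef, ← lie_skew]
      exact neg_mem h3
    · set s : ℤ := ∑ k : Fin (n + 1), a k.castSucc with hs
      set b : ℤ := a (Fin.last (n + 1)) with hb
      set u : FL K := lnMonFin K n (fun k => a k.castSucc) (fun k => idx k.castSucc) with hu
      have hmod : s ≡ b [ZMOD 2] := by
        have hcast : ((b - s : ℤ) : K) = 0 := by push_cast; exact h2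
        have hdvd : (2 : ℤ) ∣ b - s := by
          have := (CharP.intCast_eq_zero_iff K 2 (b - s)).mp hcast
          exact_mod_cast this
        rw [Int.modEq_iff_dvd]
        exact hdvd
      set v0 : ℤ × ℕ → FL K := fun p =>
        if p = (s, 1) then u
        else if p = (b, 2) then FreeLieAlgebra.of K (b, idx (Fin.last (n + 1)))
        else FreeLieAlgebra.of K p with hv0
      set φ : FL K →ₗ⁅K⁆ FL K := FreeLieAlgebra.lift K v0 with hφ
      have hgr : IsGradedEndo K φ := by
        intro c j
        rw [hφ, lift_of_apply]
        simp only [hv0]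
        split_ifs with hc1 hc2
        · rw [Prod.mk.injEq] at hc1
          rw [hc1.1]
          exact Submodule.subset_span (isHomBracket_lnMonFin K n _ _)
        · rw [Prod.mk.injEq] at hc2
          rw [hc2.1]
          exact Submodule.subset_span (IsHomBracket.gen b _)
        · exact Submodule.subset_span (IsHomBracket.gen c j)
      have hbr : ⁅FreeLieAlgebra.of K ((s : ℤ), (1 : ℕ)),
          FreeLieAlgebra.of K ((b : ℤ), (2 : ℕ))⁆ ∈ I := hS ⟨s, b, hmod, rfl⟩
      have hmem := hTI φ hgr _ hbr
      have hval : φ ⁅FreeLieAlgebra.of K ((s : ℤ), (1 : ℕ)),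
          FreeLieAlgebra.of K ((b : ℤ), (2 : ℕ))⁆ = lnMonFin K (n + 1) a idx := by
        have e1 : v0 (s, 1) = u := if_pos rfl
        have e2 : v0 (b, 2) = FreeLieAlgebra.of K (b, idx (Fin.last (n + 1))) := by
          rw [show v0 (b, 2) = if ((b, 2) : ℤ × ℕ) = (s, 1) then u
            else if ((b, 2) : ℤ × ℕ) = (b, 2) then
              FreeLieAlgebra.of K (b, idx (Fin.last (n + 1)))
            else FreeLieAlgebra.of K (b, 2) from rfl,
            if_neg (by simp), if_pos rfl]
        rw [hφ, LieHom.map_lie, lift_of_apply, lift_of_apply, e1, e2, hdef]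
      rw [← hval]
      exact hmem

end Aux

/-- Proposition 3.2: every left-normed graded monomial identity of `U_1` is a consequence
of the identities `⁅x_1^a, x_2^b⁆`, `a ≡ b (mod 2)`. -/
theorem monomial_identity_mem_TSpan [CharP K 2] (n : ℕ)
    (a : Fin (n + 1) → ℤ) (idx : Fin (n + 1) → ℕ)
    (hM : lnMonFin K n a idx ∈ TU1 K) :
    lnMonFin K n a idx ∈ TSpan K {f : FL K | ∃ a b : ℤ, a ≡ b [ZMOD 2] ∧
      f = ⁅FreeLieAlgebra.of K (a, 1), FreeLieAlgebra.of K (b, 2)⁆} := by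
  intro I hTI hS
  exact key_lemma K I hTI hS n a idx (evalCoeff_eq_zero K n a idx hM)
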